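/- Every monotone determined space that is locally hypercompact has weak one-step closure; that is, if X is a monotone determined locally hypercompact space, then Â = cl(A) for every subset A ⊆ X. -/

import Mathlib

open Set Topology

universe u v

variable {X : Type u}

/-- The specialization order: `x ≤ y` iff `x` lies in the closure of `{y}`. -/
def sle [TopologicalSpace X] (x y : X) : Prop := x ∈ closure ({y} : Set X)

/-- `↑A` with respect to the specialization order. -/
def upSet [TopologicalSpace X] (A : Set X) : Set X := {x | ∃ a ∈ A, sle a x}

/-- `↓A` with respect to the specialization order. -/
def downSet [TopologicalSpace X] (A : Set X) : Set X := {x | ∃ a ∈ A, sle x a}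

/-- A subset is directed: nonempty and any two elements have an upper bound in it. -/
def DirSet [TopologicalSpace X] (D : Set X) : Prop :=
  D.Nonempty ∧ ∀ a ∈ D, ∀ b ∈ D, ∃ c ∈ D, sle a c ∧ sle b c

/-- `D →_τ x`: every open set containing `x` meets `D`. -/
def DConv [TopologicalSpace X] (D : Set X) (x : X) : Prop :=
  ∀ U : Set X, IsOpen U → x ∈ U → (D ∩ U).Nonempty

/-- Monotone determined open set. -/
def MDOpen [TopologicalSpace X] (U : Set X) : Prop :=
  ∀ D : Set X, DirSet D → ∀ x ∈ U, DConv D x → (D ∩ U).Nonempty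

/-- Monotone determined space: every monotone determined open set is open. -/
def MonDet (X : Type u) [TopologicalSpace X] : Prop :=
  ∀ U : Set X, MDOpen U → IsOpen U

/-- `x ≪_d y`. -/
def dwb [TopologicalSpace X] (x y : X) : Prop :=
  ∀ D : Set X, DirSet D → DConv D y → ∃ d ∈ D, sle x d

/-- `⇓_d x = {y | y ≪_d x}`. -/
def dDown [TopologicalSpace X] (x : X) : Set X := {y | dwb y x}

/-- `⇑_d x = {y | x ≪_d y}`. -/
def dUp [TopologicalSpace X] (x : X) : Set X := {y | dwb x y}

/-- c-space. -/
def CSpace (X : Type u) [TopologicalSpace X] : Prop :=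
  ∀ U : Set X, IsOpen U → ∀ y ∈ U, ∃ x : X, y ∈ interior (upSet {x}) ∧ upSet {x} ⊆ U

/-- Locally hypercompact space. -/
def LocallyHypercompact (X : Type u) [TopologicalSpace X] : Prop :=
  ∀ U : Set X, IsOpen U → ∀ x ∈ U, ∃ F : Set X, F.Finite ∧ F.Nonempty ∧
    x ∈ interior (upSet F) ∧ upSet F ⊆ U

/-- `A^{↓≪} = {x ∈ A : ⇓_d x ∩ A ≠ ∅}`. -/
def lowApprox [TopologicalSpace X] (A : Set X) : Set X :=
  {x | x ∈ A ∧ (dDown x ∩ A).Nonempty}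

/-- `A^{↑≪} = {x : ⇓_d x ⊆ ↓A}`. -/
def upApprox [TopologicalSpace X] (A : Set X) : Set X :=
  {x | dDown x ⊆ downSet A}

/-- `Ã = {x : ∃ directed D ⊆ ↓A ∩ ↓x with D →_τ x}`. -/
def tilde [TopologicalSpace X] (A : Set X) : Set X :=
  {x | ∃ D : Set X, DirSet D ∧ D ⊆ downSet A ∩ downSet {x} ∧ DConv D x}

/-- `Â = {x : ∃ directed D ⊆ ↓A with D →_τ x}`. -/
def hatSet [TopologicalSpace X] (A : Set X) : Set X :=
  {x | ∃ D : Set X, DirSet D ∧ D ⊆ downSet A ∧ DConv D x}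

/-- One-step closure. -/
def OneStepClosure (X : Type u) [TopologicalSpace X] : Prop :=
  ∀ A : Set X, tilde A = closure A

/-- Weak one-step closure. -/
def WeakOneStepClosure (X : Type u) [TopologicalSpace X] : Prop :=
  ∀ A : Set X, hatSet A = closure A

/-- d-meet continuous space. -/
def DMeetCont (X : Type u) [TopologicalSpace X] : Prop :=
  MonDet X ∧ ∀ (D : Set X) (x : X), DirSet D → DConv D x →
    x ∈ closure (downSet D ∩ downSet {x})

/-- An ideal on `J`: closed under subsets and finite unions. -/
def IsIdeal {J : Type v} (I : Set (Set J)) : Prop :=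
  (∀ A ∈ I, ∀ B : Set J, B ⊆ A → B ∈ I) ∧ ∀ A ∈ I, ∀ B ∈ I, A ∪ B ∈ I

/-- IS-convergence of a net with respect to an ideal. -/
def ISConv [TopologicalSpace X] {J : Type v} (xj : J → X) (I : Set (Set J)) (x : X) : Prop :=
  ∃ D : Set X, DirSet D ∧ DConv D x ∧ ∀ d ∈ D, {j | ¬ sle d (xj j)} ∈ I

/-- I-convergence of a net with respect to an (explicit) topology. -/
def IConvT {J : Type v} (t : TopologicalSpace X) (xj : J → X) (I : Set (Set J)) (x : X) : Prop :=
  ∀ U : Set X, t.IsOpen U → x ∈ U → {j | xj j ∉ U} ∈ I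

/-- ISL-convergence. -/
def ISLConv [TopologicalSpace X] {J : Type v} (xj : J → X) (I : Set (Set J)) (x : X) : Prop :=
  ISConv xj I x ∧ ∀ y : X, {j | ¬ sle y (xj j)} ∈ I → sle y x

/-- A directed family of nonempty finite subsets (Smyth preorder). -/
def DirFam [TopologicalSpace X] (F : Set (Set X)) : Prop :=
  (∀ G ∈ F, G.Finite ∧ G.Nonempty) ∧
  ∀ G1 ∈ F, ∀ G2 ∈ F, ∃ G ∈ F, G ⊆ upSet G1 ∩ upSet G2

/-- `ℱ →_τ x`: every open set containing `x` contains a member of `ℱ`. -/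
def FConv [TopologicalSpace X] (F : Set (Set X)) (x : X) : Prop :=
  ∀ U : Set X, IsOpen U → x ∈ U → ∃ G ∈ F, G ⊆ U

/-- IGS-convergence. -/
def IGSConv [TopologicalSpace X] {J : Type v} (xj : J → X) (I : Set (Set J)) (x : X) : Prop :=
  ∃ F : Set (Set X), DirFam F ∧ FConv F x ∧ ∀ G ∈ F, {j | xj j ∉ upSet G} ∈ I

/-- IGSL-convergence. -/
def IGSLConv [TopologicalSpace X] {J : Type v} (xj : J → X) (I : Set (Set J)) (x : X) : Prop :=
  IGSConv xj I x ∧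
    ∀ G : Set X, G.Finite → G.Nonempty → {j | xj j ∉ upSet G} ∈ I → x ∈ upSet G

/-- The Lawson topology: generated by the open sets of `τ` and complements of `↑y`. -/
def lawson (X : Type u) [TopologicalSpace X] : TopologicalSpace X :=
  TopologicalSpace.generateFrom {V | IsOpen V ∨ ∃ y : X, V = (upSet {y})ᶜ}

/-- The family `IS(X)`. -/
def memIS (X : Type u) [TopologicalSpace X] (U : Set X) : Prop :=
  ∀ (J : Type u) [Preorder J], Nonempty J → (∀ a b : J, ∃ c, a ≤ c ∧ b ≤ c) →
    ∀ (xj : J → X) (I : Set (Set J)), IsIdeal I →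
      ∀ x ∈ U, ISConv xj I x → {j | xj j ∉ U} ∈ I

/-- The family `IGS(X)`. -/
def memIGS (X : Type u) [TopologicalSpace X] (U : Set X) : Prop :=
  ∀ (J : Type u) [Preorder J], Nonempty J → (∀ a b : J, ∃ c, a ≤ c ∧ b ≤ c) →
    ∀ (xj : J → X) (I : Set (Set J)), IsIdeal I →
      ∀ x ∈ U, IGSConv xj I x → {j | xj j ∉ U} ∈ I

private lemma sle_refl'' [TopologicalSpace X] (x : X) : sle x x := subset_closure rfl

private lemma sle_trans'' [TopologicalSpace X] {x y z : X} (h1 : sle x y) (h2 : sle y z) :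
    sle x z :=
  closure_minimal (Set.singleton_subset_iff.mpr h2) isClosed_closure h1

private lemma mem_open_of_sle'' [TopologicalSpace X] {U : Set X} {d a : X}
    (h : sle d a) (hU : IsOpen U) (hd : d ∈ U) : a ∈ U := by
  rcases mem_closure_iff.mp h U hU hd with ⟨y, hyU, hy⟩
  rcases hy with rfl
  exact hyU

private lemma chain_inter_finite'' {X : Type u} {F : Set X} (hF : F.Finite)
    (c : Set (Set X)) (hc : IsChain (· ⊆ ·) c) (hne : c.Nonempty)
    (h : ∀ C ∈ c, (C ∩ F).Nonempty) : ((⋂₀ c) ∩ F).Nonempty := by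
  have himg : ((fun C => C ∩ F) '' c).Finite :=
    hF.finite_subsets.subset (by rintro _ ⟨C, -, rfl⟩; exact Set.inter_subset_right)
  obtain ⟨C0, hC0, hmin⟩ : ∃ C0 ∈ c, ∀ C ∈ c, C ∩ F ≤ C0 ∩ F → C0 ∩ F = C ∩ F := by
    obtain ⟨C0, hC0, hmin⟩ := Set.Finite.exists_minimalFor' (fun C => C ∩ F) c himg hne
    exact ⟨C0, hC0, fun C hC h => le_antisymm (hmin hC h) h⟩
  obtain ⟨e, heC0, heF⟩ := h C0 hC0
  refine ⟨e, ?_, heF⟩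
  intro C hC
  rcases eq_or_ne C C0 with rfl | hne'
  · exact heC0
  · rcases hc hC hC0 hne' with hsub | hsub
    · have : C0 ∩ F = C ∩ F := hmin C hC (Set.inter_subset_inter_left F hsub)
      have : e ∈ C ∩ F := this ▸ ⟨heC0, heF⟩
      exact this.1
    · exact hsub heC0

/-- Every monotone determined locally hypercompact space has weak
one-step closure. -/
theorem stmt_7 [TopologicalSpace X] [T0Space X] (hX : MonDet X)
    (hlh : LocallyHypercompact X) :
    WeakOneStepClosure X := by
  intro A
  apply Set.Subset.antisymm
  · rintro x ⟨D, hD, hDA, hconv⟩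
    rw [mem_closure_iff]
    intro U hU hxU
    rcases hconv U hU hxU with ⟨d, hdD, hdU⟩
    rcases hDA hdD with ⟨a, haA, hda⟩
    exact ⟨a, mem_open_of_sle'' hda hU hdU, haA⟩
  · intro x hx
    -- The collection of candidate sets
    set S : Set (Set X) := {C | C ⊆ downSet A ∧ (∀ m ∈ C, ∀ m', sle m' m → m' ∈ C) ∧
      ∀ F : Set X, F.Finite → F.Nonempty → x ∈ interior (upSet F) → (C ∩ F).Nonempty} with hSdef
    have hdownS : downSet A ∈ S := by
      refine ⟨Set.Subset.rfl, ?_, ?_⟩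
      · rintro m ⟨a, haA, hma⟩ m' hm'
        exact ⟨a, haA, sle_trans'' hm' hma⟩
      · intro F hFfin hFne hxF
        have hopen : IsOpen (interior (upSet F)) := isOpen_interior
        rcases mem_closure_iff.mp hx _ hopen hxF with ⟨a, haU, haA⟩
        rcases interior_subset haU with ⟨f, hfF, hfa⟩
        exact ⟨f, ⟨a, haA, hfa⟩, hfF⟩
    have hzorn : ∃ M, Minimal (· ∈ S) M := by
      apply zorn_superset S
      intro c hcS hc
      rcases c.eq_empty_or_nonempty with rfl | hcne
      · exact ⟨downSet A, hdownS, by simp⟩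
      · refine ⟨⋂₀ c, ⟨?_, ?_, ?_⟩, fun s hs => Set.sInter_subset_of_mem hs⟩
        · rcases hcne with ⟨C0, hC0⟩
          exact (Set.sInter_subset_of_mem hC0).trans (hcS hC0).1
        · intro m hm m' hm' C hC
          exact (hcS hC).2.1 m (hm C hC) m' hm'
        · intro F hFfin hFne hxF
          exact chain_inter_finite'' hFfin c hc hcne
            (fun C hC => (hcS hC).2.2 F hFfin hFne hxF)
    obtain ⟨M, hMS, hMmin⟩ := hzorn
    obtain ⟨hMA, hMlow, hMmeets⟩ := hMS
    -- M is nonempty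
    obtain ⟨F0, hF0fin, hF0ne, hxF0, _⟩ := hlh Set.univ isOpen_univ x (Set.mem_univ x)
    have hMne : M.Nonempty := by
      rcases hMmeets F0 hF0fin hF0ne hxF0 with ⟨m, hmM, -⟩
      exact ⟨m, hmM⟩
    -- M is directed
    have hMdir : ∀ a ∈ M, ∀ b ∈ M, ∃ z ∈ M, sle a z ∧ sle b z := by
      intro a ha b hb
      by_contra hcon
      push_neg at hcon
      -- shrinkings of M
      have key : ∀ p : X, p ∈ M →
          (∀ F : Set X, F.Finite → F.Nonempty → x ∈ interior (upSet F) →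
            ({m ∈ M | ¬ sle p m} ∩ F).Nonempty) → False := by
        intro p hp hmeets
        have hsub : {m ∈ M | ¬ sle p m} ⊆ M := fun m hm => hm.1
        have hmem : {m ∈ M | ¬ sle p m} ∈ S := by
          refine ⟨hsub.trans hMA, ?_, hmeets⟩
          rintro m ⟨hmM, hmp⟩ m' hm'
          exact ⟨hMlow m hmM m' hm', fun hc => hmp (sle_trans'' hc hm')⟩
        have hpin : p ∈ {m ∈ M | ¬ sle p m} := hMmin hmem hsub hp
        exact hpin.2 (sle_refl'' p)
      -- so there exist F1, F2 witnessing failure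
      have h1 : ∃ F1 : Set X, F1.Finite ∧ F1.Nonempty ∧ x ∈ interior (upSet F1) ∧
          ∀ m ∈ M, m ∈ F1 → sle a m := by
        by_contra h
        push_neg at h
        refine key a ha ?_
        intro F hFfin hFne hxF
        rcases h F hFfin hFne hxF with ⟨m, hmM, hmF, hnot⟩
        exact ⟨m, ⟨hmM, hnot⟩, hmF⟩
      have h2 : ∃ F2 : Set X, F2.Finite ∧ F2.Nonempty ∧ x ∈ interior (upSet F2) ∧
          ∀ m ∈ M, m ∈ F2 → sle b m := by
        by_contra h
        push_neg at h
        refine key b hb ?_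
        intro F hFfin hFne hxF
        rcases h F hFfin hFne hxF with ⟨m, hmM, hmF, hnot⟩
        exact ⟨m, ⟨hmM, hnot⟩, hmF⟩
      obtain ⟨F1, hF1fin, hF1ne, hxF1, hall1⟩ := h1
      obtain ⟨F2, hF2fin, hF2ne, hxF2, hall2⟩ := h2
      -- combine via local hypercompactness
      have hUopen : IsOpen (interior (upSet F1) ∩ interior (upSet F2)) :=
        isOpen_interior.inter isOpen_interior
      obtain ⟨F3, hF3fin, hF3ne, hxF3, hF3sub⟩ :=
        hlh _ hUopen x ⟨hxF1, hxF2⟩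
      rcases hMmeets F3 hF3fin hF3ne hxF3 with ⟨m, hmM, hmF3⟩
      have hmup : m ∈ upSet F3 := ⟨m, hmF3, sle_refl'' m⟩
      have hm1 : m ∈ upSet F1 := interior_subset (hF3sub hmup).1
      have hm2 : m ∈ upSet F2 := interior_subset (hF3sub hmup).2
      rcases hm1 with ⟨f1, hf1F, hf1m⟩
      rcases hm2 with ⟨f2, hf2F, hf2m⟩
      have hf1M : f1 ∈ M := hMlow m hmM f1 hf1m
      have hf2M : f2 ∈ M := hMlow m hmM f2 hf2m
      have hsa : sle a m := sle_trans'' (hall1 f1 hf1M hf1F) hf1m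
      have hsb : sle b m := sle_trans'' (hall2 f2 hf2M hf2F) hf2m
      exact hcon m hmM hsa hsb
    -- M converges to x
    have hMconv : DConv M x := by
      intro U hU hxU
      obtain ⟨F, hFfin, hFne, hxF, hFU⟩ := hlh U hU x hxU
      rcases hMmeets F hFfin hFne hxF with ⟨m, hmM, hmF⟩
      exact ⟨m, hmM, hFU ⟨m, hmF, sle_refl'' m⟩⟩
    exact ⟨M, ⟨hMne, hMdir⟩, hMA, hMconv⟩
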